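/- (Proposition 1 of the paper, duration part, after Vidal et al.) Let σ and σ′ be visit sequences whose duration and time-warp functions have the representations D_σ(t) = D(σ) + max{E(σ) − t, 0}, TW_σ(t) = TW(σ) + max{t − L(σ), 0}, D_{σ′}(t) = D(σ′) + max{E(σ′) − t, 0}, TW_{σ′}(t) = TW(σ′) + max{t − L(σ′), 0} for all t ∈ ℝ, with E(σ) ≤ L(σ) and E(σ′) ≤ L(σ′). Let δ ≥ 0 be the connecting travel time, and set Δ = D(σ) − TW(σ) + δ and Δ_WT = max{E(σ′) − Δ − L(σ), 0}. Then for all t ∈ ℝ, the duration of the concatenation satisfies D_{σ⊕δ⊕σ′}(t) = D'' + max{E'' − t, 0}, where D'' = D(σ) + D(σ′) + δ + Δ_WT and E'' = max{E(σ′) − Δ, E(σ)} − Δ_WT. -/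
import Mathlib


/-- Arrival times of a visit sequence started at time `t`:
`a 0 = t`, `a (k+1) = s k + μ k + δ k` where `s k = min (max (a k) (e k)) (l k)`. -/
noncomputable def arrive (μ e l δ : ℕ → ℝ) (t : ℝ) : ℕ → ℝ
  | 0 => t
  | k + 1 => min (max (arrive μ e l δ t k) (e k)) (l k) + μ k + δ k

/-- Service start times with time warp. -/
noncomputable def serve (μ e l δ : ℕ → ℝ) (t : ℝ) (k : ℕ) : ℝ :=
  min (max (arrive μ e l δ t k) (e k)) (l k)

/-- Total time warp of a visit sequence of length `n+1` started at time `t`. -/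
noncomputable def timeWarp (n : ℕ) (μ e l δ : ℕ → ℝ) (t : ℝ) : ℝ :=
  ∑ k ∈ Finset.range (n + 1), max (arrive μ e l δ t k - l k) 0

/-- Total waiting time of a visit sequence of length `n+1` started at time `t`. -/
noncomputable def waiting (n : ℕ) (μ e l δ : ℕ → ℝ) (t : ℝ) : ℝ :=
  ∑ k ∈ Finset.range (n + 1), max (e k - arrive μ e l δ t k) 0

/-- Duration of a visit sequence of length `n+1` started at time `t`. -/
noncomputable def duration (n : ℕ) (μ e l δ : ℕ → ℝ) (t : ℝ) : ℝ :=
  (∑ k ∈ Finset.range (n + 1), μ k) + (∑ k ∈ Finset.range n, δ k) +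
    waiting n μ e l δ t

/-- Visit data of the concatenation `σ ⊕ δ ⊕ σ′`: the first `m+1` visits come
from `σ` (data `f`), the remaining ones from `σ′` (data `f'`). -/
noncomputable def catV (m : ℕ) (f f' : ℕ → ℝ) (k : ℕ) : ℝ :=
  if k ≤ m then f k else f' (k - (m + 1))

/-- Travel times of the concatenation `σ ⊕ δ ⊕ σ′`: the first `m` edges come from
`σ`, the connecting edge from visit `m` to visit `m+1` has travel time `c`, and
the remaining edges come from `σ′`. -/
noncomputable def catE (m : ℕ) (δ δ' : ℕ → ℝ) (c : ℝ) (k : ℕ) : ℝ :=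
  if k < m then δ k else if k = m then c else δ' (k - (m + 1))

lemma clamp_eq (a e l : ℝ) (h : e ≤ l) :
    min (max a e) l = a + max (e - a) 0 - max (a - l) 0 := by
  simp only [max_def, min_def]
  split_ifs <;> linarith

lemma key_max (A L B t : ℝ) (h : A ≤ L) :
    max (A - t) 0 + max (B - t - max (A - t) 0 + max (t - L) 0) 0 =
      max (B - L) 0 + max (max B A - max (B - L) 0 - t) 0 := by
  simp only [max_def]
  split_ifs <;> linarith

lemma arrive_cat_le (m : ℕ) (μ e l δ μ' e' l' δ' : ℕ → ℝ) (c t : ℝ) :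
    ∀ k, k ≤ m →
      arrive (catV m μ μ') (catV m e e') (catV m l l') (catE m δ δ' c) t k =
        arrive μ e l δ t k := by
  intro k
  induction k with
  | zero => intro _; rfl
  | succ k ih =>
    intro hk
    have hkm : k < m := hk
    have hkm' : k ≤ m := le_of_lt hkm
    simp [arrive, ih hkm', catV, catE, hkm, hkm']

lemma arrive_cat_ge (m : ℕ) (μ e l δ μ' e' l' δ' : ℕ → ℝ) (c t : ℝ) :
    ∀ j,
      arrive (catV m μ μ') (catV m e e') (catV m l l') (catE m δ δ' c) t
          (m + 1 + j) =
        arrive μ' e' l' δ' (serve μ e l δ t m + μ m + c) j := by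
  intro j
  induction j with
  | zero =>
    show arrive _ _ _ _ t (m + 1) = _
    simp [arrive, arrive_cat_le m μ e l δ μ' e' l' δ' c t m le_rfl, catV, catE,
      serve]
  | succ j ih =>
    have h1 : m + 1 + (j + 1) = (m + 1 + j) + 1 := by ring
    have h2 : ¬ (m + 1 + j ≤ m) := by omega
    have h3 : ¬ (m + 1 + j < m) := by omega
    have h4 : ¬ (m + 1 + j = m) := by omega
    have h5 : m + 1 + j - (m + 1) = j := by omega
    rw [h1]
    simp [arrive, ih, catV, catE, h2, h3, h4, h5]

lemma arrive_eq (μ e l δ : ℕ → ℝ) (t : ℝ) :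
    ∀ k, (∀ i, i < k → e i ≤ l i) →
      arrive μ e l δ t k =
        t + (∑ i ∈ Finset.range k, (μ i + δ i)) +
          ∑ i ∈ Finset.range k,
            (max (e i - arrive μ e l δ t i) 0 -
              max (arrive μ e l δ t i - l i) 0) := by
  intro k
  induction k with
  | zero => intro _; simp [arrive]
  | succ k ih =>
    intro h
    have hk : ∀ i, i < k → e i ≤ l i := fun i hi => h i (hi.trans (Nat.lt_succ_self k))
    rw [show arrive μ e l δ t (k+1) = min (max (arrive μ e l δ t k) (e k)) (l k) + μ k + δ k from rfl,
      clamp_eq _ _ _ (h k (Nat.lt_succ_self k)),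
      Finset.sum_range_succ, Finset.sum_range_succ, ih hk]
    ring

/-- Proposition 1 (duration part): with Δ = D(σ) - TW(σ) + δ and
Δ_WT = max (E(σ′) - Δ - L(σ)) 0, the duration of the concatenation satisfies
D(t) = D'' + max (E'' - t) 0 where D'' = D(σ) + D(σ′) + δ + Δ_WT and
E'' = max (E(σ′) - Δ) (E(σ)) - Δ_WT. -/
theorem concat_duration_representation
    (m n : ℕ) (μ e l δ μ' e' l' δ' : ℕ → ℝ) (c : ℝ)
    (hμ : ∀ k ≤ m, 0 ≤ μ k) (hel : ∀ k ≤ m, e k ≤ l k) (hδ : ∀ k < m, 0 ≤ δ k)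
    (hμ' : ∀ k ≤ n, 0 ≤ μ' k) (hel' : ∀ k ≤ n, e' k ≤ l' k)
    (hδ' : ∀ k < n, 0 ≤ δ' k) (hc : 0 ≤ c)
    (Dσ TWσ Eσ Lσ Dσ' TWσ' Eσ' Lσ' : ℝ)
    (hDσ : ∀ t : ℝ, duration m μ e l δ t = Dσ + max (Eσ - t) 0)
    (hTWσ : ∀ t : ℝ, timeWarp m μ e l δ t = TWσ + max (t - Lσ) 0)
    (hDσ' : ∀ t : ℝ, duration n μ' e' l' δ' t = Dσ' + max (Eσ' - t) 0)
    (hTWσ' : ∀ t : ℝ, timeWarp n μ' e' l' δ' t = TWσ' + max (t - Lσ') 0)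
    (hEL : Eσ ≤ Lσ) (hEL' : Eσ' ≤ Lσ')
    (Δ ΔWT D'' E'' : ℝ)
    (hΔ : Δ = Dσ - TWσ + c)
    (hΔWT : ΔWT = max (Eσ' - Δ - Lσ) 0)
    (hD'' : D'' = Dσ + Dσ' + c + ΔWT)
    (hE'' : E'' = max (Eσ' - Δ) Eσ - ΔWT) :
    ∀ t : ℝ,
      duration (m + n + 1) (catV m μ μ') (catV m e e') (catV m l l')
          (catE m δ δ' c) t =
        D'' + max (E'' - t) 0 := by
  intro t
  set t' : ℝ := serve μ e l δ t m + μ m + c with ht'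
  -- t' = t + D_σ(t) - TW_σ(t) + c
  have harr : arrive μ e l δ t m =
      t + (∑ i ∈ Finset.range m, (μ i + δ i)) +
        ∑ i ∈ Finset.range m,
          (max (e i - arrive μ e l δ t i) 0 -
            max (arrive μ e l δ t i - l i) 0) :=
    arrive_eq μ e l δ t m (fun i hi => hel i (le_of_lt hi))
  have ht'eq : t' = t + duration m μ e l δ t - timeWarp m μ e l δ t + c := by
    rw [ht', serve, clamp_eq _ _ _ (hel m le_rfl), duration, waiting, timeWarp,
      Finset.sum_range_succ (f := fun k => max (e k - arrive μ e l δ t k) 0),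
      Finset.sum_range_succ (f := fun k => max (arrive μ e l δ t k - l k) 0),
      Finset.sum_range_succ (f := μ), harr, Finset.sum_add_distrib,
      Finset.sum_sub_distrib]
    ring
  have ht'2 : t' = t + Δ + max (Eσ - t) 0 - max (t - Lσ) 0 := by
    rw [ht'eq, hDσ, hTWσ, hΔ]; ring
  -- split the duration of the concatenation
  have hsplit :
      duration (m + n + 1) (catV m μ μ') (catV m e e') (catV m l l')
          (catE m δ δ' c) t =
        duration m μ e l δ t + duration n μ' e' l' δ' t' + c := by
    have hmn : m + n + 1 + 1 = (m + 1) + (n + 1) := by ring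
    have hmn2 : m + n + 1 = (m + 1) + n := by ring
    rw [duration, waiting, hmn, hmn2,
      Finset.sum_range_add (catV m μ μ') (m + 1) (n + 1),
      Finset.sum_range_add (catE m δ δ' c) (m + 1) n,
      Finset.sum_range_add (fun k => max (catV m e e' k -
        arrive (catV m μ μ') (catV m e e') (catV m l l')
          (catE m δ δ' c) t k) 0) (m + 1) (n + 1),
      Finset.sum_range_succ (catE m δ δ' c) m]
    have e1 : ∀ k ∈ Finset.range (m + 1), catV m μ μ' k = μ k := by
      intro k hk
      simp only [Finset.mem_range] at hk
      simp [catV, Nat.lt_succ_iff.mp hk]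
    have e2 : ∀ k ∈ Finset.range (n + 1), catV m μ μ' (m + 1 + k) = μ' k := by
      intro k _
      have : ¬ (m + 1 + k ≤ m) := by omega
      simp [catV, this, Nat.add_sub_cancel_left]
    have e3 : ∀ k ∈ Finset.range m, catE m δ δ' c k = δ k := by
      intro k hk
      simp only [Finset.mem_range] at hk
      simp [catE, hk]
    have e4 : ∀ k ∈ Finset.range n, catE m δ δ' c (m + 1 + k) = δ' k := by
      intro k _
      have h1 : ¬ (m + 1 + k < m) := by omega
      have h2 : ¬ (m + 1 + k = m) := by omega
      simp [catE, h1, h2, Nat.add_sub_cancel_left]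
    have e5 : catE m δ δ' c m = c := by simp [catE]
    have e6 : ∀ k ∈ Finset.range (m + 1),
        max (catV m e e' k - arrive (catV m μ μ') (catV m e e') (catV m l l')
          (catE m δ δ' c) t k) 0 = max (e k - arrive μ e l δ t k) 0 := by
      intro k hk
      simp only [Finset.mem_range] at hk
      have hk' : k ≤ m := Nat.lt_succ_iff.mp hk
      rw [arrive_cat_le m μ e l δ μ' e' l' δ' c t k hk']
      simp [catV, hk']
    have e7 : ∀ k ∈ Finset.range (n + 1),
        max (catV m e e' (m + 1 + k) - arrive (catV m μ μ') (catV m e e')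
          (catV m l l') (catE m δ δ' c) t (m + 1 + k)) 0 =
        max (e' k - arrive μ' e' l' δ' t' k) 0 := by
      intro k _
      rw [arrive_cat_ge m μ e l δ μ' e' l' δ' c t k]
      have : ¬ (m + 1 + k ≤ m) := by omega
      simp [catV, this, Nat.add_sub_cancel_left, ht']
    rw [Finset.sum_congr rfl e1, Finset.sum_congr rfl e2,
      Finset.sum_congr rfl e3, Finset.sum_congr rfl e4, e5,
      Finset.sum_congr rfl e6, Finset.sum_congr rfl e7]
    rw [duration, duration, waiting, waiting]
    ring
  rw [hsplit, hDσ, hDσ' t', ht'2, hD'', hE'', hΔWT]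
  have := key_max Eσ Lσ (Eσ' - Δ) t hEL
  have harg : Eσ' - (t + Δ + max (Eσ - t) 0 - max (t - Lσ) 0) =
      Eσ' - Δ - t - max (Eσ - t) 0 + max (t - Lσ) 0 := by ring
  rw [harg]
  have h2 : Eσ' - Δ - t - max (Eσ - t) 0 + max (t - Lσ) 0 =
      (Eσ' - Δ) - t - max (Eσ - t) 0 + max (t - Lσ) 0 := by ring
  rw [h2]
  have h3 : Eσ' - Δ - Lσ = (Eσ' - Δ) - Lσ := by ring
  rw [h3]
  linarith [this]
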